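/- arXiv:1708.01196 — 10 statements merged into one kernel-verified Lean document; each statement's English description precedes it below -/
import Mathlib

section
/- Every complex bilinear form on ℂ² can be represented by a matrix of type A(p) or type B(p,q): for every 2×2 complex matrix M there exists an invertible 2×2 complex matrix G such that either Gᵀ M G = A(p) for some p ∈ ℂ, or Gᵀ M G = B(p,q) for some p, q ∈ ℂ. -/
open Matrix

lemma sqrt_exists (x : ℂ) : ∃ z : ℂ, z ^ 2 = x :=
  IsAlgClosed.exists_pow_nat_eq x zero_lt_two

lemma quad_root (a b c d r : ℂ) (ha : a ≠ 0) (hr : r ^ 2 = (b+c)^2 - 4*a*d) :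
    a*((-(b+c)+r)/(2*a))^2 + (b+c)*((-(b+c)+r)/(2*a)) + d = 0 := by
  field_simp
  ring_nf
  first
    | linear_combination -hr
    | linear_combination hr
    | linear_combination (2*a^2)*hr

/-- Every complex bilinear form on `ℂ²` can be represented by a matrix of type
`A(p) = !![0, p; -p, 0]` or of type `B(p,q) = !![1, p; q, 0]`. -/
theorem bilinear_form_two_dim_classification (M : Matrix (Fin 2) (Fin 2) ℂ) :
    ∃ G : Matrix (Fin 2) (Fin 2) ℂ, IsUnit G.det ∧
      ((∃ p : ℂ, Gᵀ * M * G = !![0, p; -p, 0]) ∨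
       (∃ p q : ℂ, Gᵀ * M * G = !![1, p; q, 0])) := by
  set a := M 0 0 with haa
  set b := M 0 1 with hbb
  set c := M 1 0 with hcc
  set d := M 1 1 with hdd
  have hM : M = !![a, b; c, d] := by rw [Matrix.eta_fin_two M]
  by_cases ha : a = 0
  · by_cases hd : d = 0
    · by_cases hbc : b + c = 0
      · -- alternating case
        refine ⟨1, by simp, Or.inl ⟨b, ?_⟩⟩
        have hc : c = -b := by linear_combination hbc
        rw [hM, ha, hd, hc]
        simp
      · -- a = d = 0, b + c ≠ 0
        refine ⟨!![1, 1; (b+c)⁻¹, 0], ?_, Or.inr ⟨c/(b+c), b/(b+c), ?_⟩⟩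
        · rw [Matrix.det_fin_two_of]
          simp only [isUnit_iff_ne_zero]
          field_simp
          simp [hbc]
        · rw [hM, ha, hd]
          ext i j
          fin_cases i <;> fin_cases j <;>
            simp [Matrix.mul_apply, Fin.sum_univ_succ] <;> (try field_simp) <;> ring
    · -- a = 0, d ≠ 0
      obtain ⟨z, hz⟩ := sqrt_exists d
      have hz0 : z ≠ 0 := by rintro rfl; simp at hz; exact hd hz.symm
      refine ⟨!![0, 1; z⁻¹, 0], ?_, Or.inr ⟨(c/z), (b/z), ?_⟩⟩
      · rw [Matrix.det_fin_two_of]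
        simp only [isUnit_iff_ne_zero]
        field_simp
        simp [hz0]
      · rw [hM, ha]
        ext i j
        fin_cases i <;> fin_cases j <;>
          simp [Matrix.mul_apply, Fin.sum_univ_succ] <;> (try field_simp) <;>
            first
              | linear_combination hz
              | linear_combination -hz
              | linear_combination 2*hz
              | ring
  · -- a ≠ 0
    obtain ⟨z, hz⟩ := sqrt_exists a
    have hz0 : z ≠ 0 := by rintro rfl; simp at hz; exact ha hz.symm
    obtain ⟨r, hr⟩ := sqrt_exists ((b+c)^2 - 4*a*d)
    set s : ℂ := (-(b+c) + r) / (2*a) with hs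
    have hroot : a*s^2 + (b+c)*s + d = 0 := quad_root a b c d r ha hr
    refine ⟨!![z⁻¹, s; 0, 1], ?_, Or.inr ⟨(a*s+b)/z, (a*s+c)/z, ?_⟩⟩
    · rw [Matrix.det_fin_two_of]
      simp only [isUnit_iff_ne_zero]
      field_simp
      simp [hz0]
    · rw [hM]
      ext i j
      fin_cases i <;> fin_cases j <;>
        simp [Matrix.mul_apply, Fin.sum_univ_succ] <;> (try field_simp) <;>
          first
            | linear_combination hz
            | linear_combination -hz
            | linear_combination 2*hz
            | linear_combination hroot
            | linear_combination -hroot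
            | ring
end

section
/- For all p, q ∈ ℂ, the matrix B(p,q) is congruent to B(q,p): there exists an invertible 2×2 complex matrix G with Gᵀ B(p,q) G = B(q,p). -/
open Matrix

/-- `B(p,q) = !![1, p; q, 0]` is congruent to `B(q,p)`. -/
theorem B_congruent_swap (p q : ℂ) :
    ∃ G : Matrix (Fin 2) (Fin 2) ℂ, IsUnit G.det ∧
      Gᵀ * !![1, p; q, 0] * G = !![1, q; p, 0] := by
  refine ⟨!![1, p + q; 0, -1], ?_, ?_⟩
  · simp [Matrix.det_fin_two_of]
  · have h : (!![1, p + q; 0, -1] : Matrix (Fin 2) (Fin 2) ℂ)ᵀ = !![1, 0; p + q, -1] := by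
      ext i j; fin_cases i <;> fin_cases j <;> rfl
    rw [h]
    ext i j
    fin_cases i <;> fin_cases j <;>
      simp [Matrix.mul_apply, Fin.sum_univ_two] <;> ring
end

section
/- For all p, q, x, y ∈ ℂ, the matrix B(p,q) is congruent to B(x,y) if and only if there exists c ∈ ℂ with c ≠ 0 such that (x,y) = (cp, cq) or (x,y) = (cq, cp). That is, B(p,q) ≅ B(x,y) iff (p:q) = (x:y) or (p:q) = (y:x) as points of ℙ¹ (including the generic point (0:0)), so the stratum B(p:q) is parametrized by ℙ¹/Σ₂. -/
open Matrix

/-- `B(p,q)` is congruent to `B(x,y)` iff `(x,y) = (cp, cq)` or `(x,y) = (cq, cp)` for some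
nonzero scalar `c`; so the stratum `B(p:q)` is parametrized by `ℙ¹/Σ₂`. -/
theorem B_congruent_iff (p q x y : ℂ) :
    (∃ G : Matrix (Fin 2) (Fin 2) ℂ, IsUnit G.det ∧
      Gᵀ * !![1, p; q, 0] * G = !![1, x; y, 0]) ↔
    (∃ c : ℂ, c ≠ 0 ∧ ((x = c * p ∧ y = c * q) ∨ (x = c * q ∧ y = c * p))) := by
  constructor
  · rintro ⟨G, hdet, hG⟩
    have hd : G.det ≠ 0 := hdet.ne_zero
    rw [Matrix.det_fin_two] at hd
    have h01 := congrFun (congrFun hG 0) 1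
    have h10 := congrFun (congrFun hG 1) 0
    have h11 := congrFun (congrFun hG 1) 1
    simp only [Matrix.mul_apply, Fin.sum_univ_two, Matrix.transpose_apply,
      Matrix.cons_val', Matrix.cons_val_zero, Matrix.cons_val_one, Matrix.head_cons,
      Matrix.empty_val', Matrix.cons_val_fin_one, Matrix.head_fin_const,
      Matrix.of_apply] at h01 h10 h11
    have hsplit : G 0 1 * (G 0 1 + G 1 1 * (p + q)) = 0 := by linear_combination h11
    rcases mul_eq_zero.mp hsplit with hb0 | hbd
    · refine ⟨G 0 0 * G 1 1, ?_, Or.inl ⟨?_, ?_⟩⟩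
      · intro h
        exact hd (by linear_combination h - G 1 0 * hb0)
      · linear_combination -h01 + (G 0 0 + G 1 0 * q) * hb0
      · linear_combination -h10 + (G 0 0 + p * G 1 0) * hb0
    · refine ⟨-(G 0 0 * G 1 1 - G 0 1 * G 1 0), neg_ne_zero.mpr hd, Or.inr ⟨?_, ?_⟩⟩
      · linear_combination -h01 + G 0 0 * hbd
      · linear_combination -h10 + G 0 0 * hbd
  · rintro ⟨c, hc, ⟨hx, hy⟩ | ⟨hx, hy⟩⟩
    · refine ⟨!![1, 0; 0, c], ?_, ?_⟩
      · rw [Matrix.det_fin_two_of]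
        simpa [isUnit_iff_ne_zero] using hc
      · subst hx hy
        ext i j
        fin_cases i <;> fin_cases j <;>
          simp only [Matrix.mul_apply, Fin.sum_univ_two, Matrix.transpose_apply,
            Matrix.cons_val', Matrix.cons_val_zero, Matrix.cons_val_one, Matrix.head_cons,
            Matrix.empty_val', Matrix.cons_val_fin_one, Matrix.head_fin_const,
            Matrix.of_apply, Fin.isValue, Fin.mk_zero, Fin.mk_one] <;> ring
    · refine ⟨!![1, c * (p + q); 0, -c], ?_, ?_⟩
      · rw [Matrix.det_fin_two_of]
        have : (1 : ℂ) * -c - c * (p + q) * 0 = -c := by ring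
        rw [this]
        simpa [isUnit_iff_ne_zero] using hc
      · subst hx hy
        ext i j
        fin_cases i <;> fin_cases j <;>
          simp only [Matrix.mul_apply, Fin.sum_univ_two, Matrix.transpose_apply,
            Matrix.cons_val', Matrix.cons_val_zero, Matrix.cons_val_one, Matrix.head_cons,
            Matrix.empty_val', Matrix.cons_val_fin_one, Matrix.head_fin_const,
            Matrix.of_apply, Fin.isValue, Fin.mk_zero, Fin.mk_one] <;> ring
end

section
/- For every λ ∈ ℂ with λ ≠ 0, λ ≠ 1, and λ ≠ −1, the matrix H₁(λ) = !![0, 1; λ, 0] is congruent to B(λ, 1): there exists an invertible 2×2 complex matrix G with Gᵀ H₁(λ) G = B(λ, 1). -/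
open Matrix

/-- For `λ ≠ 0, 1, −1`, the matrix `H₁(λ) = !![0, 1; λ, 0]` is congruent to
`B(λ, 1) = !![1, λ; 1, 0]`. -/
theorem H1_congruent_B (lam : ℂ) (h0 : lam ≠ 0) (h1 : lam ≠ 1) (hm1 : lam ≠ -1) :
    ∃ G : Matrix (Fin 2) (Fin 2) ℂ, IsUnit G.det ∧
      Gᵀ * !![0, 1; lam, 0] * G = !![1, lam; 1, 0] := by
  have hne : lam + 1 ≠ 0 := by
    intro h; apply hm1; linear_combination h
  refine ⟨!![(lam + 1)⁻¹, 1; 1, 0], ?_, ?_⟩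
  · rw [Matrix.det_fin_two_of]
    simp
  · ext i j
    fin_cases i <;> fin_cases j <;>
      simp [Matrix.mul_apply, Fin.sum_univ_succ] <;> field_simp
end

section
/- The matrix B(0,0) = !![1, 0; 0, 0] is congruent to diag(1,0); moreover, for every nonzero (x,y) ∈ ℂ², B(0,0) has a jump deformation to B(x,y): for every t ∈ ℂ with t ≠ 0, the matrix !![1, tx; ty, 0] is congruent to B(x,y). -/
open Matrix

/-- `B(0,0) = !![1, 0; 0, 0]` is congruent to `diag(1,0)`; moreover, for every nonzero
`(x, y) ∈ ℂ²`, `B(0,0)` has a jump deformation to `B(x,y)`: for every `t ≠ 0`, the matrix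
`!![1, tx; ty, 0]` is congruent to `B(x,y)`. -/
theorem B00_congruent_and_jump :
    (∃ G : Matrix (Fin 2) (Fin 2) ℂ, IsUnit G.det ∧
      Gᵀ * !![1, 0; 0, 0] * G = Matrix.diagonal ![1, 0]) ∧
    (∀ x y : ℂ, (x, y) ≠ (0, 0) → ∀ t : ℂ, t ≠ 0 →
      ∃ G : Matrix (Fin 2) (Fin 2) ℂ, IsUnit G.det ∧
        Gᵀ * !![1, t * x; t * y, 0] * G = !![1, x; y, 0]) := by
  constructor
  · refine ⟨1, by simp, ?_⟩
    ext i j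
    fin_cases i <;> fin_cases j <;> simp [Matrix.diagonal]
  · intro x y _ t ht
    refine ⟨!![1, 0; 0, t⁻¹], ?_, ?_⟩
    · simp [Matrix.det_fin_two_of, isUnit_iff_ne_zero, ht]
    · rw [show (!![(1:ℂ), 0; 0, t⁻¹])ᵀ = !![1, 0; 0, t⁻¹] from by
        ext i j; fin_cases i <;> fin_cases j <;> rfl]
      ext i j
      fin_cases i <;> fin_cases j <;>
        simp [Matrix.mul_apply, Fin.sum_univ_two] <;> field_simp
end

section
/- The 3×3 complex matrix C₁(1,1) = !![0, 0, 1; 0, 1, 1; 1, 0, 1] is congruent to the indecomposable matrix B₆ = Γ₃ = !![0, 0, 1; 0, -1, -1; 1, 1, 0]: there exists an invertible 3×3 complex matrix G with Gᵀ C₁(1,1) G = Γ₃. -/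
open Matrix

/-- `C₁(1,1) = !![0, 0, 1; 0, 1, 1; 1, 0, 1]` is congruent to the indecomposable matrix
`Γ₃ = !![0, 0, 1; 0, -1, -1; 1, 1, 0]`. -/
theorem C1_11_congruent_Gamma3 :
    ∃ G : Matrix (Fin 3) (Fin 3) ℂ, IsUnit G.det ∧
      Gᵀ * !![0, 0, 1; 0, 1, 1; 1, 0, 1] * G = !![0, 0, 1; 0, -1, -1; 1, 1, 0] := by
  refine ⟨!![-Complex.I/2, 0, -3*Complex.I/4; 0, Complex.I, -Complex.I; 0, 0, 2*Complex.I],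
    ?_, ?_⟩
  · have h : (!![-Complex.I/2, 0, -3*Complex.I/4; 0, Complex.I, -Complex.I;
        0, 0, 2*Complex.I] : Matrix (Fin 3) (Fin 3) ℂ).det = Complex.I := by
      simp [Matrix.det_fin_three, Matrix.vecHead, Matrix.vecTail]
      ring_nf
      have h3 : Complex.I ^ 3 = -Complex.I := by
        rw [show (3:ℕ) = 2 + 1 by rfl, pow_succ, Complex.I_sq]; ring
      rw [h3]; ring
    rw [h]
    exact isUnit_iff_ne_zero.mpr Complex.I_ne_zero
  · ext i j
    fin_cases i <;> fin_cases j <;>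
      simp [Matrix.mul_apply, Fin.sum_univ_succ, Matrix.transpose_apply] <;>
      ring_nf <;> simp [Complex.I_sq] <;> ring
end

section
/- Let γ ∈ ℂ be a primitive sixth root of unity. Then the 3×3 complex matrix C₁(0,0) = !![0, 0, 0; 0, 1, 1; 0, 0, 1] is congruent to C₅(1,γ) = !![0, 0, γ; 0, 0, 0; 1, 0, 1]: there exists an invertible 3×3 complex matrix G with Gᵀ C₁(0,0) G = C₅(1,γ). -/
open Matrix

/-- If `γ` is a primitive sixth root of unity, then
`C₁(0,0) = !![0, 0, 0; 0, 1, 1; 0, 0, 1]` is congruent to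
`C₅(1,γ) = !![0, 0, γ; 0, 0, 0; 1, 0, 1]`. -/
theorem C1_00_congruent_C5_one_gamma (γ : ℂ) (hγ : IsPrimitiveRoot γ 6) :
    ∃ G : Matrix (Fin 3) (Fin 3) ℂ, IsUnit G.det ∧
      Gᵀ * !![0, 0, 0; 0, 1, 1; 0, 0, 1] * G = !![0, 0, γ; 0, 0, 0; 1, 0, 1] := by
  have h6 : γ ^ 6 = 1 := hγ.pow_eq_one
  have h2 : γ ^ 2 ≠ 1 := hγ.pow_ne_one_of_pos_of_lt (by norm_num) (by norm_num)
  have h3 : γ ^ 3 ≠ 1 := hγ.pow_ne_one_of_pos_of_lt (by norm_num) (by norm_num)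
  have hm1 : γ ≠ -1 := by
    intro h; apply h2; rw [h]; ring
  have h3' : γ ^ 3 = -1 := by
    have : (γ ^ 3 - 1) * (γ ^ 3 + 1) = 0 := by
      have : γ ^ 6 - 1 = 0 := by rw [h6]; ring
      linear_combination this
    rcases mul_eq_zero.1 this with h | h
    · exact absurd (by linear_combination h) h3
    · linear_combination h
  have hkey : γ ^ 2 = γ - 1 := by
    have : (γ + 1) * (γ ^ 2 - γ + 1) = 0 := by linear_combination h3'
    rcases mul_eq_zero.1 this with h | h
    · exact absurd (by linear_combination h) hm1
    · linear_combination h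
  refine ⟨!![0, 1, 0; γ ^ 2, 0, 0; 1, 0, 1], ?_, ?_⟩
  · have hdet : (!![0, 1, 0; γ ^ 2, 0, 0; 1, 0, 1] : Matrix (Fin 3) (Fin 3) ℂ).det = -γ ^ 2 := by
      simp [Matrix.det_fin_three]
    rw [hdet]
    have : γ ≠ 0 := hγ.ne_zero (by norm_num)
    exact (isUnit_iff_ne_zero).2 (by simpa using pow_ne_zero 2 this)
  · ext i j
    fin_cases i <;> fin_cases j <;>
      simp [Matrix.mul_apply, Fin.sum_univ_succ, Matrix.transpose_apply,
        Matrix.vecHead, Matrix.vecTail] <;>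
      first
        | ring1
        | linear_combination hkey
        | linear_combination (γ ^ 2 + γ + 1) * hkey
end

section
/- For all p, q ∈ ℂ, the 3×3 complex matrix C₅(p,q) = !![0, 0, q; 0, 0, 0; p, 0, 1] is congruent to B₂(p,q) = !![1, p, 0; q, 0, 0; 0, 0, 0] (the family C₅ is pointwise equivalent to the family B₂), and moreover C₅(p,q) is congruent to C₅(q,p), so the stratum C₅(p:q) is parametrized by ℙ¹/Σ₂. -/
open Matrix

/-- The family `C₅(p,q) = !![0, 0, q; 0, 0, 0; p, 0, 1]` is pointwise congruent to the family
`B₂(p,q) = !![1, p, 0; q, 0, 0; 0, 0, 0]`, and moreover `C₅(p,q)` is congruent to `C₅(q,p)`,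
so the stratum `C₅(p:q)` is parametrized by `ℙ¹/Σ₂`. -/
theorem C5_congruent_B2_and_swap (p q : ℂ) :
    (∃ G : Matrix (Fin 3) (Fin 3) ℂ, IsUnit G.det ∧
      Gᵀ * !![0, 0, q; 0, 0, 0; p, 0, 1] * G = !![1, p, 0; q, 0, 0; 0, 0, 0]) ∧
    (∃ G : Matrix (Fin 3) (Fin 3) ℂ, IsUnit G.det ∧
      Gᵀ * !![0, 0, q; 0, 0, 0; p, 0, 1] * G = !![0, 0, p; 0, 0, 0; q, 0, 1]) := by
  constructor
  · refine ⟨!![0, 1, 0; 0, 0, 1; 1, 0, 0], ?_, ?_⟩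
    · simp [Matrix.det_fin_three]
    · ext i j
      fin_cases i <;> fin_cases j <;>
        simp [Matrix.mul_apply, Fin.sum_univ_succ, Matrix.vecHead, Matrix.vecTail] <;> ring
  · refine ⟨!![-1, 0, 0; 0, 1, 0; p + q, 0, 1], ?_, ?_⟩
    · simp [Matrix.det_fin_three]
    · ext i j
      fin_cases i <;> fin_cases j <;>
        simp [Matrix.mul_apply, Fin.sum_univ_succ, Matrix.vecHead, Matrix.vecTail] <;> ring
end

section
/- The 3×3 complex matrix C₃ = !![0, 1, 1; -1, 0, 0; 0, 0, 0] is congruent to B₅ = J₃(0) = !![0, 1, 0; 0, 0, 1; 0, 0, 0], and the matrix C₂ = !![0, 1, 0; -1, 0, 0; 0, 0, 1] is congruent to B₃ = !![0, -1, 0; 1, 0, 0; 0, 0, 1]: in each case there exists an invertible 3×3 complex matrix G carrying out the congruence Gᵀ M G = N. -/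
open Matrix

/-- `C₃ = !![0, 1, 1; -1, 0, 0; 0, 0, 0]` is congruent to `B₅ = J₃(0) = !![0, 1, 0; 0, 0, 1; 0, 0, 0]`,
and `C₂ = !![0, 1, 0; -1, 0, 0; 0, 0, 1]` is congruent to `B₃ = !![0, -1, 0; 1, 0, 0; 0, 0, 1]`. -/
theorem C3_congruent_B5_and_C2_congruent_B3 :
    (∃ G : Matrix (Fin 3) (Fin 3) ℂ, IsUnit G.det ∧
      Gᵀ * !![0, 1, 1; -1, 0, 0; 0, 0, 0] * G = !![0, 1, 0; 0, 0, 1; 0, 0, 0]) ∧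
    (∃ G : Matrix (Fin 3) (Fin 3) ℂ, IsUnit G.det ∧
      Gᵀ * !![0, 1, 0; -1, 0, 0; 0, 0, 1] * G = !![0, -1, 0; 1, 0, 0; 0, 0, 1]) := by
  constructor
  · refine ⟨!![0, 1, 0; -1, 0, 0; 1, 0, 1], ?_, ?_⟩
    · simp [Matrix.det_fin_three]
    · ext i j
      fin_cases i <;> fin_cases j <;>
        simp [Matrix.mul_apply, Fin.sum_univ_three, Matrix.transpose, Matrix.vecHead, Matrix.vecTail]
  · refine ⟨!![1, 0, 0; 0, -1, 0; 0, 0, 1], ?_, ?_⟩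
    · simp [Matrix.det_fin_three]
    · ext i j
      fin_cases i <;> fin_cases j <;>
        simp [Matrix.mul_apply, Fin.sum_univ_three, Matrix.transpose, Matrix.vecHead, Matrix.vecTail]
end

section
/- (Arnold) Let A be a complex square matrix in Jordan normal form: A is the block-diagonal matrix whose blocks are Jordan blocks J_{n_{λ,k}}(λ), where λ ranges over the (distinct) eigenvalues of A and, for each eigenvalue λ, the block sizes satisfy n_{λ,1} ≥ n_{λ,2} ≥ ⋯ ≥ n_{λ,r(λ)} ≥ 1. Then the dimension over ℂ of the centralizer of A, i.e. of the subspace {B : A·B = B·A} of square matrices, equals Σ_λ (n_{λ,1} + 3·n_{λ,2} + 5·n_{λ,3} + ⋯) = Σ_λ Σ_{k=1}^{r(λ)} (2k−1)·n_{λ,k}; this number is the number of parameters in a miniversal deformation of A under the conjugation action of GL(n, ℂ). -/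
open Matrix

/-- The Jordan block of size `m` with eigenvalue `lam`: `lam` on the diagonal, `1` on the
superdiagonal, `0` elsewhere. -/
def jordanBlock (m : ℕ) (lam : ℂ) : Matrix (Fin m) (Fin m) ℂ :=
  Matrix.of fun i j => if i = j then lam else if (i : ℕ) + 1 = (j : ℕ) then 1 else 0

namespace ArnoldAux


lemma jordanBlock_apply (m : ℕ) (lam : ℂ) (i j : Fin m) :
    jordanBlock m lam i j = if i = j then lam else if (i : ℕ) + 1 = (j : ℕ) then 1 else 0 := rfl

lemma jordanBlock_apply' (m : ℕ) (lam : ℂ) (i j : Fin m) :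
    jordanBlock m lam i j =
      if (i : ℕ) = (j : ℕ) then lam else if (i : ℕ) + 1 = (j : ℕ) then 1 else 0 := by
  rw [jordanBlock_apply]; simp [Fin.ext_iff]

lemma jordanBlock_zero_apply (m : ℕ) (i j : Fin m) :
    jordanBlock m 0 i j = if (i : ℕ) + 1 = (j : ℕ) then 1 else 0 := by
  rw [jordanBlock_apply']
  by_cases h1 : (i : ℕ) = (j : ℕ)
  · rw [if_pos h1, if_neg (by omega)]
  · rw [if_neg h1]

lemma jordanBlock_decomp (m : ℕ) (lam : ℂ) :
    jordanBlock m lam = lam • (1 : Matrix (Fin m) (Fin m) ℂ) + jordanBlock m 0 := by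
  ext i j
  simp only [jordanBlock_apply', jordanBlock_zero_apply, Matrix.add_apply, Matrix.smul_apply,
    Matrix.one_apply, smul_ite, smul_eq_mul, mul_one, mul_zero]
  by_cases h : i = j
  · subst h
    simp
  · simp [h, (show ¬((i : ℕ) = (j : ℕ)) from fun hc => h (Fin.ext hc))]

/-- The Sylvester operator `X ↦ J_n(lam) X - X J_m(mu)`. -/
noncomputable def sylv (n m : ℕ) (lam mu : ℂ) :
    Matrix (Fin n) (Fin m) ℂ →ₗ[ℂ] Matrix (Fin n) (Fin m) ℂ where
  toFun X := jordanBlock n lam * X - X * jordanBlock m mu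
  map_add' X Y := by simp only [Matrix.mul_add, Matrix.add_mul]; abel
  map_smul' c X := by
    simp only [Matrix.mul_smul, Matrix.smul_mul, RingHom.id_apply, smul_sub]

lemma sylv_apply (n m : ℕ) (lam mu : ℂ) (X : Matrix (Fin n) (Fin m) ℂ) :
    sylv n m lam mu X = jordanBlock n lam * X - X * jordanBlock m mu := rfl

/-- Left multiplication by `jordanBlock n 0`, entrywise. -/
lemma nil_mul_apply {n m : ℕ} (X : Matrix (Fin n) (Fin m) ℂ) (i : Fin n) (j : Fin m) :
    (jordanBlock n 0 * X) i j =
      if h : (i : ℕ) + 1 < n then X ⟨(i : ℕ) + 1, h⟩ j else 0 := by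
  rw [Matrix.mul_apply]
  by_cases h : (i : ℕ) + 1 < n
  · rw [dif_pos h, Finset.sum_eq_single (⟨(i : ℕ) + 1, h⟩ : Fin n)]
    · rw [jordanBlock_zero_apply, if_pos (by simp only [Fin.val_mk]), one_mul]
    · intro b _ hb
      have hb' : ¬((i : ℕ) + 1 = (b : ℕ)) := fun hc => hb (Fin.ext hc.symm)
      rw [jordanBlock_zero_apply, if_neg hb', zero_mul]
    · intro hb; exact absurd (Finset.mem_univ _) hb
  · rw [dif_neg h]
    apply Finset.sum_eq_zero
    intro b _
    have hb' : ¬((i : ℕ) + 1 = (b : ℕ)) := by have := b.2; omega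
    rw [jordanBlock_zero_apply, if_neg hb', zero_mul]

lemma mul_nil_apply {n m : ℕ} (X : Matrix (Fin n) (Fin m) ℂ) (i : Fin n) (j : Fin m) :
    (X * jordanBlock m 0) i j =
      if h : 0 < (j : ℕ) then X i ⟨(j : ℕ) - 1, by omega⟩ else 0 := by
  rw [Matrix.mul_apply]
  by_cases h : 0 < (j : ℕ)
  · rw [dif_pos h, Finset.sum_eq_single (⟨(j : ℕ) - 1, by omega⟩ : Fin m)]
    · rw [jordanBlock_zero_apply, if_pos (by simp only [Fin.val_mk]; omega), mul_one]
    · intro b _ hb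
      have hb' : ¬((b : ℕ) + 1 = (j : ℕ)) := fun hc => hb (Fin.ext (by simp only [Fin.val_mk]; omega))
      rw [jordanBlock_zero_apply, if_neg hb', mul_zero]
    · intro hb; exact absurd (Finset.mem_univ _) hb
  · rw [dif_neg h]
    apply Finset.sum_eq_zero
    intro b _
    have hb' : ¬((b : ℕ) + 1 = (j : ℕ)) := by omega
    rw [jordanBlock_zero_apply, if_neg hb', mul_zero]


-- power of nilpotent jordan block
lemma nil_pow_apply (m k : ℕ) : ∀ (i j : Fin m),
    ((jordanBlock m 0) ^ k) i j = if (i : ℕ) + k = (j : ℕ) then 1 else 0 := by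
  induction k with
  | zero =>
    intro i j
    simp only [pow_zero, Matrix.one_apply, add_zero]
    by_cases h : i = j
    · rw [if_pos h, if_pos (by rw [h])]
    · rw [if_neg h, if_neg (fun hc => h (Fin.ext hc))]
  | succ k ih =>
    intro i j
    rw [pow_succ, mul_nil_apply]
    by_cases h : 0 < (j : ℕ)
    · rw [dif_pos h, ih]
      simp only [Fin.val_mk]
      by_cases h2 : (i : ℕ) + k = (j : ℕ) - 1
      · rw [if_pos h2, if_pos (by omega)]
      · rw [if_neg h2, if_neg (by omega)]
    · rw [dif_neg h, if_neg (by omega)]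

lemma nil_pow_eq_zero (m : ℕ) : (jordanBlock m 0) ^ m = 0 := by
  ext i j
  rw [nil_pow_apply, if_neg (by have := j.2; omega)]
  rfl

/-- left/right multiplication operators -/
noncomputable def lmul (n m : ℕ) :
    Matrix (Fin n) (Fin m) ℂ →ₗ[ℂ] Matrix (Fin n) (Fin m) ℂ where
  toFun X := jordanBlock n 0 * X
  map_add' X Y := Matrix.mul_add _ X Y
  map_smul' c X := Matrix.mul_smul _ c X

noncomputable def rmul (n m : ℕ) :
    Matrix (Fin n) (Fin m) ℂ →ₗ[ℂ] Matrix (Fin n) (Fin m) ℂ where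
  toFun X := X * jordanBlock m 0
  map_add' X Y := Matrix.add_mul X Y _
  map_smul' c X := Matrix.smul_mul c X _

lemma lmul_pow (n m k : ℕ) : ∀ (X : Matrix (Fin n) (Fin m) ℂ),
    ((lmul n m) ^ k) X = (jordanBlock n 0) ^ k * X := by
  induction k with
  | zero => intro X; simp
  | succ k ih =>
    intro X
    rw [pow_succ, Module.End.mul_apply, ih]
    show (jordanBlock n 0) ^ k * (jordanBlock n 0 * X) = _
    rw [pow_succ, Matrix.mul_assoc]

lemma rmul_pow (n m k : ℕ) : ∀ (X : Matrix (Fin n) (Fin m) ℂ),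
    ((rmul n m) ^ k) X = X * (jordanBlock m 0) ^ k := by
  induction k with
  | zero => intro X; simp
  | succ k ih =>
    intro X
    rw [pow_succ, Module.End.mul_apply, ih]
    show (X * jordanBlock m 0) * (jordanBlock m 0) ^ k = _
    rw [Matrix.mul_assoc, ← pow_succ']

lemma isNilpotent_lmul_sub_rmul (n m : ℕ) : IsNilpotent (lmul n m - rmul n m) := by
  have hc : Commute (lmul n m) (rmul n m) := by
    ext X : 1
    show jordanBlock n 0 * (X * jordanBlock m 0) = (jordanBlock n 0 * X) * jordanBlock m 0
    rw [Matrix.mul_assoc]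
  have hl : IsNilpotent (lmul n m) := ⟨n, by ext X : 1; simp [lmul_pow, nil_pow_eq_zero]⟩
  have hr : IsNilpotent (rmul n m) := ⟨m, by ext X : 1; simp [rmul_pow, nil_pow_eq_zero]⟩
  exact Commute.isNilpotent_sub hc hl hr

lemma sylv_eq (n m : ℕ) (lam mu : ℂ) :
    sylv n m lam mu = (lam - mu) • (1 : Module.End ℂ (Matrix (Fin n) (Fin m) ℂ))
      + (lmul n m - rmul n m) := by
  ext X : 1
  show jordanBlock n lam * X - X * jordanBlock m mu = _
  rw [jordanBlock_decomp n lam, jordanBlock_decomp m mu]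
  show _ = (lam - mu) • X + (jordanBlock n 0 * X - X * jordanBlock m 0)
  rw [Matrix.add_mul, Matrix.mul_add, Matrix.smul_mul, Matrix.mul_smul, Matrix.one_mul,
    Matrix.mul_one, sub_smul]
  abel

lemma ker_sylv_ne (n m : ℕ) (lam mu : ℂ) (h : lam ≠ mu) :
    LinearMap.ker (sylv n m lam mu) = ⊥ := by
  rw [← LinearMap.isUnit_iff_ker_eq_bot, sylv_eq]
  apply IsNilpotent.isUnit_add_left_of_commute (isNilpotent_lmul_sub_rmul n m)
  · have : (lam - mu) • (1 : Module.End ℂ (Matrix (Fin n) (Fin m) ℂ))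
        = algebraMap ℂ _ (lam - mu) := (Algebra.algebraMap_eq_smul_one _).symm
    rw [this]
    exact (isUnit_iff_ne_zero.mpr (sub_ne_zero.mpr h)).map (algebraMap ℂ _)
  · exact Commute.smul_right (Commute.one_right _) _

lemma sylv_same (n m : ℕ) (lam : ℂ) : sylv n m lam lam = sylv n m 0 0 := by
  ext X : 1
  show jordanBlock n lam * X - X * jordanBlock m lam
      = jordanBlock n 0 * X - X * jordanBlock m 0
  rw [jordanBlock_decomp n lam, jordanBlock_decomp m lam, Matrix.add_mul, Matrix.mul_add,
    Matrix.smul_mul, Matrix.mul_smul, Matrix.one_mul, Matrix.mul_one]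
  abel

lemma mem_ker_sylv00 {n m : ℕ} (X : Matrix (Fin n) (Fin m) ℂ) :
    X ∈ LinearMap.ker (sylv n m 0 0) ↔ jordanBlock n 0 * X = X * jordanBlock m 0 := by
  rw [LinearMap.mem_ker, sylv_apply, sub_eq_zero]

/-- ℕ-indexed extension of a matrix by zero. -/
noncomputable def ext' {n m : ℕ} (X : Matrix (Fin n) (Fin m) ℂ) (i j : ℕ) : ℂ :=
  if h : i < n ∧ j < m then X ⟨i, h.1⟩ ⟨j, h.2⟩ else 0

lemma ext'_apply {n m : ℕ} (X : Matrix (Fin n) (Fin m) ℂ) (i : Fin n) (j : Fin m) :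
    ext' X i j = X i j := by
  rw [ext', dif_pos ⟨i.2, j.2⟩]

lemma ext'_zero {n m : ℕ} (X : Matrix (Fin n) (Fin m) ℂ) (i j : ℕ)
    (h : n ≤ i ∨ m ≤ j) : ext' X i j = 0 := by
  rw [ext', dif_neg (by omega)]

section KerStructure
variable {n m : ℕ} {X : Matrix (Fin n) (Fin m) ℂ}
  (hX : jordanBlock n 0 * X = X * jordanBlock m 0)
include hX

lemma ker_c0 (i : ℕ) : ext' X (i + 1) 0 = 0 := by
  by_cases h : (i + 1 < n) ∧ (0 < m)
  · rw [ext', dif_pos h]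
    have := congrFun (congrFun hX ⟨i, by omega⟩) ⟨0, h.2⟩
    rw [nil_mul_apply, mul_nil_apply, dif_pos (show (i:ℕ) + 1 < n from h.1),
      dif_neg (by simp)] at this
    exact this
  · exact ext'_zero X _ _ (by omega)

lemma ker_shift (i j : ℕ) (hj : j + 1 < m) : ext' X (i + 1) (j + 1) = ext' X i j := by
  by_cases hi : i < n
  · have := congrFun (congrFun hX ⟨i, hi⟩) ⟨j + 1, hj⟩
    rw [nil_mul_apply, mul_nil_apply, dif_pos (show 0 < j + 1 by omega)] at this
    by_cases h2 : i + 1 < n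
    · rw [dif_pos h2] at this
      rw [ext', dif_pos ⟨h2, hj⟩, ext', dif_pos ⟨hi, by omega⟩]
      convert this using 3 <;> simp only [Fin.val_mk] <;> omega
    · rw [dif_neg h2] at this
      rw [ext'_zero X _ _ (by omega), ext', dif_pos ⟨hi, by omega⟩]
      rw [show X ⟨i, hi⟩ ⟨j, by omega⟩ = X ⟨i, hi⟩ ⟨j + 1 - 1, by omega⟩ from by congr 1]
      exact this
  · rw [ext'_zero X _ _ (by omega), ext'_zero X _ _ (by omega)]

lemma ker_shift_t (t : ℕ) : ∀ i j, j + t < m → ext' X (i + t) (j + t) = ext' X i j := by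
  induction t with
  | zero => intro i j _; rfl
  | succ t ih =>
    intro i j h
    have h1 : (j + t) + 1 < m := by omega
    calc ext' X (i + (t+1)) (j + (t+1)) = ext' X ((i + t) + 1) ((j + t) + 1) := by ring_nf
      _ = ext' X (i + t) (j + t) := ker_shift hX _ _ h1
      _ = ext' X i j := ih i j (by omega)

lemma ker_forced_zero (d : ℕ) (hd : d + n < m) : ext' X 0 d = 0 := by
  have := ker_shift_t hX n 0 d (by omega)
  rw [zero_add] at this
  rw [← this, ext'_zero X _ _ (by omega)]

lemma ker_structure (i : Fin n) (j : Fin m) :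
    X i j = if m - min n m + (i : ℕ) ≤ (j : ℕ) then ext' X 0 ((j : ℕ) - (i : ℕ)) else 0 := by
  by_cases hij : (i : ℕ) ≤ (j : ℕ)
  · have h' : ext' X (i : ℕ) (j : ℕ) = ext' X 0 ((j : ℕ) - (i : ℕ)) := by
      have h := ker_shift_t hX (i : ℕ) 0 ((j : ℕ) - (i : ℕ)) (by have := j.2; omega)
      rwa [zero_add, show (j : ℕ) - (i : ℕ) + (i : ℕ) = (j : ℕ) from by omega] at h
    by_cases hc : m - min n m + (i : ℕ) ≤ (j : ℕ)
    · rw [if_pos hc, ← ext'_apply X i j, h']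
    · rw [if_neg hc, ← ext'_apply X i j, h']
      exact ker_forced_zero hX _ (by have := i.2; have := j.2; omega)
  · rw [if_neg (by omega)]
    have h := ker_shift_t hX (j : ℕ) ((i : ℕ) - (j : ℕ)) 0 (by have := j.2; omega)
    have h0 : ext' X (i : ℕ) (j : ℕ) = ext' X ((i : ℕ) - (j : ℕ)) 0 := by
      rwa [zero_add, show (i : ℕ) - (j : ℕ) + (j : ℕ) = (i : ℕ) from by omega] at h
    rw [← ext'_apply X i j, h0, show (i : ℕ) - (j : ℕ) = ((i : ℕ) - (j : ℕ) - 1) + 1 from by omega,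
      ker_c0 hX]

end KerStructure

/-- Reading off the free parameters: first row, last `min n m` columns. -/
noncomputable def phi (n m : ℕ) :
    Matrix (Fin n) (Fin m) ℂ →ₗ[ℂ] (Fin (min n m) → ℂ) where
  toFun X t := X ⟨0, by have := t.2; omega⟩ ⟨m - min n m + (t : ℕ), by have := t.2; omega⟩
  map_add' X Y := rfl
  map_smul' c X := rfl

/-- The Toeplitz-type matrix built from parameters `c`. -/
noncomputable def toep (n m : ℕ) (c : Fin (min n m) → ℂ) : Matrix (Fin n) (Fin m) ℂ :=
  Matrix.of fun i j =>
    if h : m - min n m + (i : ℕ) ≤ (j : ℕ) then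
      c ⟨(j : ℕ) - (i : ℕ) - (m - min n m), by have := j.2; omega⟩ else 0

lemma toep_apply (n m : ℕ) (c : Fin (min n m) → ℂ) (i : Fin n) (j : Fin m) :
    toep n m c i j =
      if h : m - min n m + (i : ℕ) ≤ (j : ℕ) then
        c ⟨(j : ℕ) - (i : ℕ) - (m - min n m), by have := j.2; omega⟩ else 0 := rfl

lemma toep_mem_ker (n m : ℕ) (c : Fin (min n m) → ℂ) :
    toep n m c ∈ LinearMap.ker (sylv n m 0 0) := by
  rw [mem_ker_sylv00]
  ext i j
  rw [nil_mul_apply, mul_nil_apply]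
  by_cases h1 : (i : ℕ) + 1 < n
  · rw [dif_pos h1, toep_apply]
    by_cases h2 : m - min n m + ((i : ℕ) + 1) ≤ (j : ℕ)
    · rw [dif_pos (by simp only [Fin.val_mk]; omega), dif_pos (show 0 < (j : ℕ) by omega),
        toep_apply, dif_pos (by simp only [Fin.val_mk]; omega)]
      congr 1
      exact Fin.ext (by simp only [Fin.val_mk]; omega)
    · rw [dif_neg (by simp only [Fin.val_mk]; omega)]
      by_cases h3 : 0 < (j : ℕ)
      · rw [dif_pos h3, toep_apply, dif_neg (by simp only [Fin.val_mk]; omega)]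
      · rw [dif_neg h3]
  · rw [dif_neg h1]
    by_cases h3 : 0 < (j : ℕ)
    · rw [dif_pos h3, toep_apply,
        dif_neg (by simp only [Fin.val_mk]; have := i.2; have := j.2; omega)]
    · rw [dif_neg h3]

lemma phi_toep (n m : ℕ) (c : Fin (min n m) → ℂ) : phi n m (toep n m c) = c := by
  funext t
  show toep n m c _ _ = c t
  rw [toep_apply, dif_pos (by simp only [Fin.val_mk]; omega)]
  congr 1
  exact Fin.ext (by simp only [Fin.val_mk]; omega)

lemma phi_inj_on_ker (n m : ℕ) (X : Matrix (Fin n) (Fin m) ℂ)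
    (hX : X ∈ LinearMap.ker (sylv n m 0 0)) (h0 : phi n m X = 0) : X = 0 := by
  rw [mem_ker_sylv00] at hX
  ext i j
  rw [ker_structure hX i j]
  by_cases hc : m - min n m + (i : ℕ) ≤ (j : ℕ)
  · rw [if_pos hc]
    have hq : 0 < min n m := by have := i.2; have := j.2; omega
    have ht : (j : ℕ) - (i : ℕ) - (m - min n m) < min n m := by
      have := j.2; omega
    have := congrFun h0 ⟨(j : ℕ) - (i : ℕ) - (m - min n m), ht⟩
    show ext' X 0 ((j : ℕ) - (i : ℕ)) = (0 : Matrix (Fin n) (Fin m) ℂ) i j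
    rw [Matrix.zero_apply]
    rw [show (0 : Fin (min n m) → ℂ) _ = (0:ℂ) from rfl] at this
    rw [← this]
    show ext' X 0 _ = X _ _
    rw [ext', dif_pos (show 0 < n ∧ (j : ℕ) - (i : ℕ) < m from by have := i.2; have := j.2; omega)]
    congr 1 <;> exact Fin.ext (by simp only [Fin.val_mk]; omega)
  · rw [if_neg hc]; rfl

noncomputable def kerEquiv (n m : ℕ) :
    (LinearMap.ker (sylv n m 0 0)) ≃ₗ[ℂ] (Fin (min n m) → ℂ) := by
  apply LinearEquiv.ofBijective ((phi n m) ∘ₗ (LinearMap.ker (sylv n m 0 0)).subtype)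
  constructor
  · intro X Y hXY
    ext1
    have : phi n m ((X : Matrix (Fin n) (Fin m) ℂ) - Y) = 0 := by
      rw [map_sub]
      rw [show phi n m (X : Matrix (Fin n) (Fin m) ℂ) = phi n m (Y : Matrix (Fin n) (Fin m) ℂ)
        from hXY]
      simp
    have hsub : ((X : Matrix (Fin n) (Fin m) ℂ) - Y) ∈ LinearMap.ker (sylv n m 0 0) :=
      Submodule.sub_mem _ X.2 Y.2
    have := phi_inj_on_ker n m _ hsub this
    exact sub_eq_zero.mp this
  · intro c
    exact ⟨⟨toep n m c, toep_mem_ker n m c⟩, phi_toep n m c⟩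

lemma finrank_ker_sylv (n m : ℕ) (lam mu : ℂ) :
    Module.finrank ℂ (LinearMap.ker (sylv n m lam mu))
      = if lam = mu then min n m else 0 := by
  by_cases h : lam = mu
  · subst h
    rw [if_pos rfl, sylv_same, (kerEquiv n m).finrank_eq, Module.finrank_pi]
    exact Fintype.card_fin _
  · rw [if_neg h, ker_sylv_ne n m lam mu h, finrank_bot]


section Blocks
variable {ι : Type*} [Fintype ι] [DecidableEq ι] (d : ι → ℕ) (lam : ι → ℂ)

/-- Decompose a big matrix into its blocks. -/
noncomputable def blockEquiv :
    Matrix (Σ i : ι, Fin (d i)) (Σ i : ι, Fin (d i)) ℂ ≃ₗ[ℂ]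
      Π p : ι × ι, Matrix (Fin (d p.1)) (Fin (d p.2)) ℂ where
  toFun B p := Matrix.of fun a b => B ⟨p.1, a⟩ ⟨p.2, b⟩
  map_add' _ _ := rfl
  map_smul' _ _ := rfl
  invFun f := Matrix.of fun x y => f (x.1, y.1) x.2 y.2
  left_inv B := by ext ⟨i, a⟩ ⟨j, b⟩; rfl
  right_inv f := rfl

lemma blockEquiv_apply (B : Matrix (Σ i : ι, Fin (d i)) (Σ i : ι, Fin (d i)) ℂ) (p : ι × ι)
    (a : Fin (d p.1)) (b : Fin (d p.2)) :
    blockEquiv d B p a b = B ⟨p.1, a⟩ ⟨p.2, b⟩ := rfl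

lemma block_mul_left (B : Matrix (Σ i : ι, Fin (d i)) (Σ i : ι, Fin (d i)) ℂ) (p : ι × ι) :
    blockEquiv d (blockDiagonal' (fun i => jordanBlock (d i) (lam i)) * B) p
      = jordanBlock (d p.1) (lam p.1) * blockEquiv d B p := by
  obtain ⟨i, j⟩ := p
  ext a b
  rw [blockEquiv_apply, Matrix.mul_apply, Matrix.mul_apply, ← Finset.univ_sigma_univ,
    Finset.sum_sigma,
    Fintype.sum_eq_single i (fun k hk => Finset.sum_eq_zero fun c _ => by
      rw [blockDiagonal'_apply_ne _ _ _ (Ne.symm hk), zero_mul])]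
  exact Finset.sum_congr rfl fun c _ => by rw [blockDiagonal'_apply_eq]; rfl

lemma block_mul_right (B : Matrix (Σ i : ι, Fin (d i)) (Σ i : ι, Fin (d i)) ℂ) (p : ι × ι) :
    blockEquiv d (B * blockDiagonal' (fun i => jordanBlock (d i) (lam i))) p
      = blockEquiv d B p * jordanBlock (d p.2) (lam p.2) := by
  obtain ⟨i, j⟩ := p
  ext a b
  rw [blockEquiv_apply, Matrix.mul_apply, Matrix.mul_apply, ← Finset.univ_sigma_univ,
    Finset.sum_sigma,
    Fintype.sum_eq_single j (fun k hk => Finset.sum_eq_zero fun c _ => by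
      rw [blockDiagonal'_apply_ne _ _ _ hk, mul_zero])]
  exact Finset.sum_congr rfl fun c _ => by rw [blockDiagonal'_apply_eq]; rfl

/-- The componentwise Sylvester operator. -/
noncomputable def pimapSylv :
    (Π p : ι × ι, Matrix (Fin (d p.1)) (Fin (d p.2)) ℂ) →ₗ[ℂ]
      (Π p : ι × ι, Matrix (Fin (d p.1)) (Fin (d p.2)) ℂ) :=
  LinearMap.pi (fun p => (sylv (d p.1) (d p.2) (lam p.1) (lam p.2)) ∘ₗ LinearMap.proj p)

lemma pimapSylv_apply (f : Π p : ι × ι, Matrix (Fin (d p.1)) (Fin (d p.2)) ℂ) (p : ι × ι) :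
    pimapSylv d lam f p = sylv (d p.1) (d p.2) (lam p.1) (lam p.2) (f p) := rfl

lemma comp_eq :
    (pimapSylv d lam) ∘ₗ (blockEquiv d).toLinearMap
      = (blockEquiv d).toLinearMap ∘ₗ
        (LinearMap.mulLeft ℂ (blockDiagonal' (fun i => jordanBlock (d i) (lam i)))
          - LinearMap.mulRight ℂ (blockDiagonal' (fun i => jordanBlock (d i) (lam i)))) := by
  ext B : 1
  funext p
  simp only [LinearMap.comp_apply, LinearEquiv.coe_coe, LinearMap.sub_apply,
    LinearMap.mulLeft_apply, LinearMap.mulRight_apply, map_sub, Pi.sub_apply,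
    pimapSylv_apply, sylv_apply, block_mul_left, block_mul_right]

/-- Kernel of a componentwise map is the product of kernels. -/
noncomputable def kerPiEquiv {P : Type*} [Fintype P] {V : P → Type*}
    [∀ p, AddCommGroup (V p)] [∀ p, Module ℂ (V p)] (f : Π p, V p →ₗ[ℂ] V p) :
    LinearMap.ker (LinearMap.pi (fun p => (f p) ∘ₗ LinearMap.proj p)) ≃ₗ[ℂ]
      Π p, LinearMap.ker (f p) where
  toFun x p := ⟨x.1 p, by
    have hx := x.2
    rw [LinearMap.mem_ker] at hx
    exact congrFun hx p⟩
  map_add' x y := rfl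
  map_smul' c x := rfl
  invFun y := ⟨fun p => (y p).1, by
    rw [LinearMap.mem_ker]; funext p; exact (y p).2⟩
  left_inv x := rfl
  right_inv y := rfl

lemma finrank_ker_block :
    Module.finrank ℂ (LinearMap.ker
      (LinearMap.mulLeft ℂ (blockDiagonal' (fun i => jordanBlock (d i) (lam i)))
        - LinearMap.mulRight ℂ (blockDiagonal' (fun i => jordanBlock (d i) (lam i)))))
      = ∑ p : ι × ι, if lam p.1 = lam p.2 then min (d p.1) (d p.2) else 0 := by
  have hker : LinearMap.ker
      (LinearMap.mulLeft ℂ (blockDiagonal' (fun i => jordanBlock (d i) (lam i)))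
        - LinearMap.mulRight ℂ (blockDiagonal' (fun i => jordanBlock (d i) (lam i))))
      = Submodule.comap (blockEquiv d).toLinearMap (LinearMap.ker (pimapSylv d lam)) := by
    have h1 : LinearMap.ker
        ((blockEquiv d).toLinearMap ∘ₗ
          (LinearMap.mulLeft ℂ (blockDiagonal' (fun i => jordanBlock (d i) (lam i)))
            - LinearMap.mulRight ℂ (blockDiagonal' (fun i => jordanBlock (d i) (lam i)))))
        = Submodule.comap (blockEquiv d).toLinearMap (LinearMap.ker (pimapSylv d lam)) := by
      rw [← comp_eq, LinearMap.ker_comp]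
    rw [← h1, LinearMap.ker_comp_of_ker_eq_bot _ (LinearEquiv.ker _)]
  rw [hker]
  have e1 : (Submodule.comap (blockEquiv d).toLinearMap (LinearMap.ker (pimapSylv d lam)))
      ≃ₗ[ℂ] LinearMap.ker (pimapSylv d lam) :=
    (blockEquiv d).ofSubmodule' (LinearMap.ker (pimapSylv d lam))
  rw [e1.finrank_eq]
  unfold pimapSylv
  rw [(kerPiEquiv (fun p : ι × ι => sylv (d p.1) (d p.2) (lam p.1) (lam p.2))).finrank_eq,
    Module.finrank_pi_fintype]
  exact Finset.sum_congr rfl fun p _ => by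
    rw [finrank_ker_sylv]

end Blocks

lemma minsum (r : ℕ) (f : ℕ → ℕ) (hf : ∀ j k, j ≤ k → k < r → f k ≤ f j) :
    ∑ k ∈ Finset.range r, ∑ k' ∈ Finset.range r, min (f k) (f k')
      = ∑ k ∈ Finset.range r, (2 * k + 1) * f k := by
  induction r with
  | zero => simp
  | succ r ih =>
    have h1 : ∀ k < r, ∑ k' ∈ Finset.range (r + 1), min (f k) (f k')
        = (∑ k' ∈ Finset.range r, min (f k) (f k')) + f r := by
      intro k hk
      rw [Finset.sum_range_succ, min_eq_right (hf k r (by omega) (by omega))]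
    have h2 : ∑ k' ∈ Finset.range (r + 1), min (f r) (f k') = r * f r + f r := by
      rw [Finset.sum_range_succ, min_self]
      congr 1
      rw [Finset.sum_congr rfl (fun k' hk' =>
        min_eq_left (hf k' r (by exact Nat.le_of_lt (Finset.mem_range.mp hk')) (by omega))),
        Finset.sum_const, Finset.card_range, smul_eq_mul]
    rw [Finset.sum_range_succ,
      Finset.sum_congr rfl (fun k hk => h1 k (Finset.mem_range.mp hk)),
      Finset.sum_add_distrib, Finset.sum_const, Finset.card_range, h2,
      ih (fun j k hj hk => hf j k hj (by omega)), Finset.sum_range_succ, smul_eq_mul]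
    ring

end ArnoldAux

/-- (Arnold) Let `A` be the block-diagonal matrix whose blocks are the Jordan blocks
`J_{n l k}(l)` for `l` ranging over a finite set `Λ` of (distinct) eigenvalues and, for each
`l ∈ Λ`, block sizes `n l 0 ≥ n l 1 ≥ ⋯ ≥ n l (r l − 1) ≥ 1`. Then the dimension over `ℂ` of
the centralizer `{B : A·B = B·A}` equals `Σ_l Σ_{k<r l} (2k+1)·(n l k)`, i.e.
`Σ_l (n_{l,1} + 3 n_{l,2} + 5 n_{l,3} + ⋯)`; this is the number of parameters in a miniversal
deformation of `A` under the conjugation action of `GL(n, ℂ)`. -/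
theorem arnold_centralizer_dimension
    (Λ : Finset ℂ) (r : ℂ → ℕ) (n : ℂ → ℕ → ℕ)
    (hpos : ∀ l ∈ Λ, ∀ k < r l, 1 ≤ n l k)
    (hmono : ∀ l ∈ Λ, ∀ j k, j ≤ k → k < r l → n l k ≤ n l j)
    (A : Matrix (Σ i : (Σ l : Λ, Fin (r l.1)), Fin (n i.1.1 i.2.1))
                (Σ i : (Σ l : Λ, Fin (r l.1)), Fin (n i.1.1 i.2.1)) ℂ)
    (hA : A = Matrix.blockDiagonal'
      (fun i : (Σ l : Λ, Fin (r l.1)) => jordanBlock (n i.1.1 i.2.1) i.1.1)) :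
    Module.finrank ℂ
      (LinearMap.ker (LinearMap.mulLeft ℂ A - LinearMap.mulRight ℂ A)) =
    ∑ l ∈ Λ, ∑ k ∈ Finset.range (r l), (2 * k + 1) * n l k := by
  subst hA
  rw [ArnoldAux.finrank_ker_block (fun i : (Σ l : Λ, Fin (r l.1)) => n i.1.1 i.2.1)
    (fun i : (Σ l : Λ, Fin (r l.1)) => (i.1.1 : ℂ))]
  rw [Fintype.sum_prod_type]
  rw [← Finset.univ_sigma_univ, Finset.sum_sigma]
  trans ∑ l : Λ, ∑ k : Fin (r l.1), ∑ k' : Fin (r l.1), min (n l.1 k) (n l.1 k')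
  · apply Finset.sum_congr rfl; intro l _
    apply Finset.sum_congr rfl; intro k _
    rw [Finset.sum_sigma]
    rw [Fintype.sum_eq_single l (fun l' hl' => Finset.sum_eq_zero fun k' _ =>
      if_neg (fun hc => hl' (Subtype.ext hc).symm))]
    exact Finset.sum_congr rfl fun k' _ => if_pos rfl
  · trans ∑ l : Λ, ∑ k ∈ Finset.range (r l.1), (2 * k + 1) * n l.1 k
    · apply Finset.sum_congr rfl; intro l _
      have conv1 : ∀ (N : ℕ) (g : ℕ → ℕ → ℕ), ∑ k : Fin N, ∑ k' : Fin N, g k k'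
          = ∑ k ∈ Finset.range N, ∑ k' ∈ Finset.range N, g k k' := by
        intro N g
        rw [Fin.sum_univ_eq_sum_range (fun a => ∑ k' : Fin N, g a k') N]
        exact Finset.sum_congr rfl fun k _ => Fin.sum_univ_eq_sum_range (g k) N
      rw [conv1 (r l.1) (fun a b => min (n l.1 a) (n l.1 b))]
      exact ArnoldAux.minsum (r l.1) (n l.1) (hmono l.1 l.2)
    · exact Finset.sum_coe_sort Λ
        (fun x => ∑ k ∈ Finset.range (r x), (2 * k + 1) * n x k)
end
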